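/- (Strict monotonic cost improvement.) Let φ be C² on an open set containing the compact box I ⊂ ℝ^{n_u} with strict second-derivative Lipschitz constants M_{i₁i₂} > 0 on I. If u, v ∈ I with v ≠ u satisfy the condition ∇φ(u)ᵀ(v − u) + (1/2) Σ_{i₁=1}^{n_u} Σ_{i₂=1}^{n_u} M_{i₁i₂} |(v_{i₁} − u_{i₁})(v_{i₂} − u_{i₂})| ≤ 0, then φ(v) < φ(u). -/

import Mathlib

open Set

set_option maxHeartbeats 1000000 in
/-- Strict monotonic cost improvement: if `φ` is C² on an open set
containing the box `I = Icc uL uU` with strict second-derivative Lipschitz constants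
`M i₁ i₂` on `I`, and `u, v ∈ I` with `v ≠ u` satisfy
`∇φ(u)ᵀ(v-u) + (1/2) Σ_{i₁} Σ_{i₂} M i₁ i₂ |(v i₁ - u i₁)(v i₂ - u i₂)| ≤ 0`,
then `φ v < φ u`. -/
theorem strict_monotonic_improvement
    {n : ℕ} (uL uU : Fin n → ℝ)
    (φ : (Fin n → ℝ) → ℝ)
    (U : Set (Fin n → ℝ)) (hUopen : IsOpen U) (hIU : Set.Icc uL uU ⊆ U)
    (hφ : ContDiffOn ℝ 2 φ U)
    (M : Fin n → Fin n → ℝ) (hMpos : ∀ i₁ i₂, 0 < M i₁ i₂)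
    (hM : ∀ u ∈ Set.Icc uL uU, ∀ i₁ i₂,
      |fderiv ℝ (fun x => fderiv ℝ φ x (Pi.single i₁ 1)) u (Pi.single i₂ 1)| < M i₁ i₂)
    (u v : Fin n → ℝ) (hu : u ∈ Set.Icc uL uU) (hv : v ∈ Set.Icc uL uU)
    (hne : v ≠ u)
    (hcond : fderiv ℝ φ u (v - u) +
      (1 / 2) * ∑ i₁, ∑ i₂, M i₁ i₂ * |(v i₁ - u i₁) * (v i₂ - u i₂)| ≤ 0) :
    φ v < φ u := by
  classical
  set d : Fin n → ℝ := v - u with hd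
  have hdne : d ≠ 0 := sub_ne_zero.mpr hne
  obtain ⟨j, hj⟩ : ∃ j, d j ≠ 0 := by
    by_contra h
    push_neg at h
    exact hdne (funext h)
  set e : Fin n → (Fin n → ℝ) := fun i => Pi.single i 1 with he
  set S : ℝ := ∑ i₁, ∑ i₂, M i₁ i₂ * |d i₁ * d i₂| with hS
  set γ : ℝ → (Fin n → ℝ) := fun t => u + t • d with hγ
  have hγI : ∀ t ∈ Icc (0:ℝ) 1, γ t ∈ Set.Icc uL uU := by
    intro t ht
    have h := (convex_Icc uL uU) hu hv (sub_nonneg.2 ht.2) ht.1 (by ring)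
    have : γ t = (1 - t) • u + t • v := by
      simp only [hγ, hd, smul_sub, sub_smul, one_smul]
      abel
    rw [this]; exact h
  have hγU : ∀ t ∈ Icc (0:ℝ) 1, γ t ∈ U := fun t ht => hIU (hγI t ht)
  have hφAt : ∀ t ∈ Icc (0:ℝ) 1, ContDiffAt ℝ 2 φ (γ t) := fun t ht =>
    hφ.contDiffAt (hUopen.mem_nhds (hγU t ht))
  have hγt : ∀ t : ℝ, HasDerivAt γ d t := by
    intro t
    simpa [hγ] using ((hasDerivAt_id t).smul_const d).const_add u
  have hBd : ∀ t ∈ Icc (0:ℝ) 1, DifferentiableAt ℝ (fderiv ℝ φ) (γ t) := by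
    intro t ht
    have h1 : ContDiffAt ℝ 1 (fderiv ℝ φ) (γ t) :=
      (hφAt t ht).fderiv_right (le_refl 2)
    exact h1.differentiableAt one_ne_zero
  set B : (Fin n → ℝ) → ((Fin n → ℝ) →L[ℝ] (Fin n → ℝ) →L[ℝ] ℝ) :=
    fun x => fderiv ℝ (fderiv ℝ φ) x with hB
  set g : ℝ → ℝ := fun t => φ (γ t) with hg
  set g1 : ℝ → ℝ := fun t => fderiv ℝ φ (γ t) d with hg1
  set g2 : ℝ → ℝ := fun t => B (γ t) d d with hg2
  have hgd : ∀ t ∈ Icc (0:ℝ) 1, HasDerivAt g (g1 t) t := fun t ht =>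
    (((hφAt t ht).differentiableAt (by norm_num)).hasFDerivAt).comp_hasDerivAt t (hγt t)
  have hg1d : ∀ t ∈ Icc (0:ℝ) 1, HasDerivAt g1 (g2 t) t := by
    intro t ht
    have h1 : HasDerivAt (fun s => fderiv ℝ φ (γ s)) (B (γ t) d) t :=
      ((hBd t ht).hasFDerivAt).comp_hasDerivAt t (hγt t)
    have h2 := h1.clm_apply (hasDerivAt_const t d)
    simpa using h2
  -- bound on second derivative on the segment
  have hdsum : d = ∑ a, d a • e a := by
    simp only [he]
    funext i
    simp [Pi.single_apply, Finset.sum_apply]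
  have hM' : ∀ x ∈ Set.Icc uL uU, ∀ a b, |B x (e a) (e b)| < M b a := by
    intro x hx a b
    have hdx : DifferentiableAt ℝ (fderiv ℝ φ) x := by
      have h1 : ContDiffAt ℝ 1 (fderiv ℝ φ) x :=
        (hφ.contDiffAt (hUopen.mem_nhds (hIU hx))).fderiv_right (le_refl 2)
      exact h1.differentiableAt one_ne_zero
    have h := hM x hx b a
    have heq : fderiv ℝ (fun y => fderiv ℝ φ y (e b)) x =
        (fderiv ℝ (fderiv ℝ φ) x).flip (e b) := by
      have := fderiv_clm_apply (𝕜 := ℝ) hdx (differentiableAt_const (e b))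
      simpa using this
    rw [he] at heq
    rw [heq] at h
    simpa [ContinuousLinearMap.flip_apply, hB, he] using h
  have hbound : ∀ t ∈ Icc (0:ℝ) 1, g2 t < S := by
    intro t ht
    have hx := hγI t ht
    have hexp : g2 t = ∑ a, ∑ b, d a * d b * B (γ t) (e b) (e a) := by
      simp only [hg2]
      conv_lhs => rw [hdsum]
      simp only [map_sum, map_smul, ContinuousLinearMap.sum_apply,
        ContinuousLinearMap.smul_apply, smul_eq_mul, Finset.mul_sum]
      exact Finset.sum_congr rfl fun a _ => Finset.sum_congr rfl fun b _ => by ring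
    have hSeq : S = ∑ a, ∑ b, |d a * d b| * M a b := by
      rw [hS]
      exact Finset.sum_congr rfl fun a _ => Finset.sum_congr rfl fun b _ => by
        rw [mul_comm]
    calc g2 t ≤ ∑ a, ∑ b, |d a * d b| * |B (γ t) (e b) (e a)| := by
          rw [hexp]
          calc ∑ a, ∑ b, d a * d b * B (γ t) (e b) (e a)
              ≤ |∑ a, ∑ b, d a * d b * B (γ t) (e b) (e a)| := le_abs_self _
            _ ≤ ∑ a, |∑ b, d a * d b * B (γ t) (e b) (e a)| :=
                Finset.abs_sum_le_sum_abs _ _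
            _ ≤ ∑ a, ∑ b, |d a * d b * B (γ t) (e b) (e a)| :=
                Finset.sum_le_sum fun a _ => Finset.abs_sum_le_sum_abs _ _
            _ = ∑ a, ∑ b, |d a * d b| * |B (γ t) (e b) (e a)| := by
                simp [abs_mul]
      _ < ∑ a, ∑ b, |d a * d b| * M a b := by
          apply Finset.sum_lt_sum
          · intro a _
            exact Finset.sum_le_sum fun b _ =>
              mul_le_mul_of_nonneg_left (hM' (γ t) hx b a).le (abs_nonneg _)
          · refine ⟨j, Finset.mem_univ j, ?_⟩
            apply Finset.sum_lt_sum
            · intro b _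
              exact mul_le_mul_of_nonneg_left (hM' (γ t) hx b j).le (abs_nonneg _)
            · refine ⟨j, Finset.mem_univ j, ?_⟩
              have hpos : 0 < |d j * d j| := abs_pos.mpr (mul_ne_zero hj hj)
              exact mul_lt_mul_of_pos_left (hM' (γ t) hx j j) hpos
      _ = S := hSeq.symm
  -- the auxiliary function k
  set k : ℝ → ℝ := fun t => g t - t * g1 0 - t ^ 2 * (S / 2) with hk
  have hkd : ∀ t ∈ Icc (0:ℝ) 1, HasDerivAt k (g1 t - g1 0 - t * S) t := by
    intro t ht
    have h1 : HasDerivAt (fun s : ℝ => s * g1 0) (g1 0) t := by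
      simpa using (hasDerivAt_id t).mul_const (g1 0)
    have h2 : HasDerivAt (fun s : ℝ => s ^ 2 * (S / 2)) (2 * t ^ 1 * (S / 2)) t :=
      (hasDerivAt_pow 2 t).mul_const (S / 2)
    have := ((hgd t ht).sub h1).sub h2
    exact this.congr_deriv (by ring)
  have hkc : ContinuousOn k (Icc 0 1) := fun t ht =>
    ((hkd t ht).continuousAt).continuousWithinAt
  have hkneg : ∀ t ∈ interior (Icc (0:ℝ) 1), deriv k t < 0 := by
    rw [interior_Icc]
    intro t ht
    have hmem : t ∈ Icc (0:ℝ) 1 := Ioo_subset_Icc_self ht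
    rw [(hkd t hmem).deriv]
    have hsub : Icc (0:ℝ) t ⊆ Icc 0 1 := Icc_subset_Icc le_rfl ht.2.le
    have hg1c : ContinuousOn g1 (Icc 0 t) := fun s hs =>
      ((hg1d s (hsub hs)).continuousAt).continuousWithinAt
    obtain ⟨c, hc, hceq⟩ := exists_hasDerivAt_eq_slope g1 g2 ht.1 hg1c
      (fun s hs => hg1d s (hsub (Ioo_subset_Icc_self hs)))
    have hcS : g2 c < S := hbound c (hsub (Ioo_subset_Icc_self hc))
    have ht0 : (0:ℝ) < t := ht.1
    rw [sub_zero] at hceq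
    have hslope : g1 t - g1 0 = g2 c * t := by
      field_simp at hceq
      linarith
    rw [hslope]
    have h1 : g2 c * t < S * t := mul_lt_mul_of_pos_right hcS ht0
    have h2 : S * t = t * S := mul_comm S t
    linarith
  have hanti : StrictAntiOn k (Icc (0:ℝ) 1) :=
    strictAntiOn_of_deriv_neg (convex_Icc 0 1) hkc hkneg
  have h01 : k 1 < k 0 :=
    hanti (left_mem_Icc.mpr zero_le_one) (right_mem_Icc.mpr zero_le_one) zero_lt_one
  have hγ0 : γ 0 = u := by simp [hγ]
  have hγ1 : γ 1 = v := by simp [hγ, hd]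
  have hk0 : k 0 = φ u := by simp [hk, hg, hγ0]
  have hk1 : k 1 = φ v - g1 0 - S / 2 := by
    simp [hk, hg, hγ1]
  have hg10 : g1 0 = fderiv ℝ φ u (v - u) := by
    simp [hg1, hγ0, hd]
  have hScond : fderiv ℝ φ u (v - u) + (1 / 2) * S ≤ 0 := by
    have : S = ∑ i₁, ∑ i₂, M i₁ i₂ * |(v i₁ - u i₁) * (v i₂ - u i₂)| := by
      rw [hS]
      exact Finset.sum_congr rfl fun i₁ _ => Finset.sum_congr rfl fun i₂ _ => by
        simp [hd]
    rw [this]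
    exact hcond
  rw [hk0, hk1, hg10] at h01
  linarith
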